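/- For every prime power q, the group PSL(2,q), i.e. the quotient of SL(2, F_q) by its center, is strongly symmetric: it is generated by two elements, and for every pair x, y with ⟨x,y⟩ = PSL(2,q) there exists an automorphism φ of PSL(2,q) with φ(x) = x⁻¹ and φ(y) = y⁻¹. -/

import Mathlib

/-- A pair `(x, y)` of elements of a group `G` is a *symmetric generating pair* if it
generates `G` and some automorphism of `G` inverts both `x` and `y`.  A group `G` is
*strongly symmetric* if it can be generated by two elements and every generating pair
is symmetric. -/
def StronglySymmetric (G : Type*) [Group G] : Prop :=
  (∃ x y : G, Subgroup.closure {x, y} = ⊤) ∧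
    ∀ x y : G, Subgroup.closure {x, y} = ⊤ →
      ∃ φ : MulAut G, φ x = x⁻¹ ∧ φ y = y⁻¹

section StronglySymmetricAux

open Matrix MatrixGroups
set_option linter.unusedSectionVars false
set_option linter.unnecessarySeqFocus false
set_option linter.unusedTactic false
set_option maxHeartbeats 1000000
variable {F : Type*} [Field F] [Fintype F]
local notation "M2" => Matrix (Fin 2) (Fin 2) F
local notation "SL2" => Matrix.SpecialLinearGroup (Fin 2) F
local notation "PSL2" => Matrix.ProjectiveSpecialLinearGroup (Fin 2) F

theorem keyid (A B : Matrix (Fin 2) (Fin 2) F) :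
    (A*B - B*A) * A = A.adjugate * (A*B - B*A) := by
  rw [Matrix.eta_fin_two A, Matrix.eta_fin_two B]
  ext i j
  fin_cases i <;> fin_cases j <;>
    simp [Matrix.mul_apply, Matrix.adjugate_fin_two, Fin.sum_univ_two] <;> ring

theorem keyid' (A B : Matrix (Fin 2) (Fin 2) F) :
    (A*B - B*A) * B = B.adjugate * (A*B - B*A) := by
  have h := keyid B A
  rw [show A*B - B*A = -(B*A - A*B) from (neg_sub _ _).symm, neg_mul, mul_neg, h]

theorem unit_inv_mul (P : (M2)ˣ) : ((P⁻¹ : (M2)ˣ) : M2) * (P : M2) = 1 := by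
  rw [← Units.val_mul, inv_mul_cancel, Units.val_one]

theorem unit_mul_inv (P : (M2)ˣ) : (P : M2) * ((P⁻¹ : (M2)ˣ) : M2) = 1 := by
  rw [← Units.val_mul, mul_inv_cancel, Units.val_one]

/-- Conjugation by a unit of the matrix ring as an automorphism of SL₂. -/
def conjSL (P : (M2)ˣ) : SL2 ≃* SL2 where
  toFun A := ⟨(P : M2) * A * ((P⁻¹ : (M2)ˣ) : M2), by
    have h1 := unit_mul_inv P
    rw [det_mul, det_mul]
    have h2 := A.property
    apply_fun det at h1
    rw [det_mul, det_one] at h1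
    calc (P : M2).det * (A : M2).det * ((P⁻¹ : (M2)ˣ) : M2).det
        = (A : M2).det * ((P : M2).det * ((P⁻¹ : (M2)ˣ) : M2).det) := by ring
      _ = 1 := by rw [h1, h2, mul_one]⟩
  invFun A := ⟨((P⁻¹ : (M2)ˣ) : M2) * A * (P : M2), by
    have h1 := unit_inv_mul P
    rw [det_mul, det_mul]
    have h2 := A.property
    apply_fun det at h1
    rw [det_mul, det_one] at h1
    calc ((P⁻¹ : (M2)ˣ) : M2).det * (A : M2).det * (P : M2).det
        = (A : M2).det * (((P⁻¹ : (M2)ˣ) : M2).det * (P : M2).det) := by ring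
      _ = 1 := by rw [h1, h2, mul_one]⟩
  left_inv A := by
    apply Subtype.ext
    simp only [SpecialLinearGroup.coe_mk]
    calc ((P⁻¹ : (M2)ˣ) : M2) * ((P : M2) * A * ((P⁻¹ : (M2)ˣ) : M2)) * (P : M2)
        = (((P⁻¹ : (M2)ˣ) : M2) * (P : M2)) * (A : M2) * (((P⁻¹ : (M2)ˣ) : M2) * (P : M2)) := by
          noncomm_ring
      _ = A := by rw [unit_inv_mul, one_mul, mul_one]
  right_inv A := by
    apply Subtype.ext
    simp only [SpecialLinearGroup.coe_mk]
    calc (P : M2) * (((P⁻¹ : (M2)ˣ) : M2) * A * (P : M2)) * ((P⁻¹ : (M2)ˣ) : M2)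
        = ((P : M2) * ((P⁻¹ : (M2)ˣ) : M2)) * (A : M2) * ((P : M2) * ((P⁻¹ : (M2)ˣ) : M2)) := by
          noncomm_ring
      _ = A := by rw [unit_mul_inv, one_mul, mul_one]
  map_mul' A B := by
    apply Subtype.ext
    simp only [SpecialLinearGroup.coe_mk, SpecialLinearGroup.coe_mul]
    calc (P : M2) * ((A : M2) * (B : M2)) * ((P⁻¹ : (M2)ˣ) : M2)
        = (P : M2) * (A : M2) * (((P⁻¹ : (M2)ˣ) : M2) * (P : M2)) * (B : M2) * ((P⁻¹ : (M2)ˣ) : M2) := by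
          rw [unit_inv_mul]; noncomm_ring
      _ = ((P : M2) * (A : M2) * ((P⁻¹ : (M2)ˣ) : M2)) * ((P : M2) * (B : M2) * ((P⁻¹ : (M2)ˣ) : M2)) := by
          noncomm_ring

theorem conjSL_apply (P : (M2)ˣ) (A : SL2) :
    ((conjSL P A : SL2) : M2) = (P : M2) * (A : M2) * ((P⁻¹ : (M2)ˣ) : M2) := rfl

/-- Conjugation by a unit matrix as automorphism of PSL₂. -/
def conjPSL (P : (M2)ˣ) : PSL2 ≃* PSL2 :=
  QuotientGroup.congr (Subgroup.center SL2) (Subgroup.center SL2) (conjSL P)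
    (Subgroup.characteristic_iff_map_eq.mp inferInstance (conjSL P))

theorem conjPSL_mk (P : (M2)ˣ) (A : SL2) :
    conjPSL P (QuotientGroup.mk A) = QuotientGroup.mk (conjSL P A) := rfl

-- center elements are scalar with zero off-diagonal
theorem center_offdiag {A : SL2} (hA : A ∈ Subgroup.center SL2) :
    (A : M2) 0 1 = 0 ∧ (A : M2) 1 0 = 0 := by
  obtain ⟨r, -, hr⟩ := Matrix.SpecialLinearGroup.mem_center_iff.mp hA
  constructor
  · rw [← hr]; simp [Matrix.scalar_apply]
  · rw [← hr]; simp [Matrix.scalar_apply]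


theorem mk_eq_mk {A B : SL2} (h : (QuotientGroup.mk A : PSL2) = QuotientGroup.mk B) :
    ∃ Z : SL2, Z ∈ Subgroup.center SL2 ∧ B = A * Z := by
  rw [QuotientGroup.eq] at h
  exact ⟨A⁻¹ * B, h, by group⟩

def TU (t : F) : Matrix.SpecialLinearGroup (Fin 2) F :=
  ⟨!![1, t; 0, 1], by simp [Matrix.det_fin_two]⟩

def TL (t : F) : Matrix.SpecialLinearGroup (Fin 2) F :=
  ⟨!![1, 0; t, 1], by simp [Matrix.det_fin_two]⟩

theorem TU_mul (s t : F) : TU (F := F) s * TU t = TU (s + t) := by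
  apply Subtype.ext
  rw [Matrix.SpecialLinearGroup.coe_mul]
  simp [TU, Matrix.SpecialLinearGroup.coe_mul, Matrix.mul_fin_two]
  ring_nf

theorem TU_zero : TU (F := F) 0 = 1 := by
  apply Subtype.ext
  simp [TU, Matrix.SpecialLinearGroup.coe_one, Matrix.one_fin_two]

theorem TU_inv (t : F) : (TU (F := F) t)⁻¹ = TU (-t) := by
  apply Subtype.ext
  rw [Matrix.SpecialLinearGroup.coe_inv]
  simp [TU, Matrix.adjugate_fin_two]

theorem TL_mul (s t : F) : TL (F := F) s * TL t = TL (s + t) := by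
  apply Subtype.ext
  rw [Matrix.SpecialLinearGroup.coe_mul]
  simp [TL, Matrix.SpecialLinearGroup.coe_mul, Matrix.mul_fin_two]

theorem TL_zero : TL (F := F) 0 = 1 := by
  apply Subtype.ext
  simp [TL, Matrix.SpecialLinearGroup.coe_one, Matrix.one_fin_two]

theorem TL_inv (t : F) : (TL (F := F) t)⁻¹ = TL (-t) := by
  apply Subtype.ext
  rw [Matrix.SpecialLinearGroup.coe_inv]
  simp [TL, Matrix.adjugate_fin_two]

theorem psl_not_comm :
    ¬ (∀ z w : Matrix.ProjectiveSpecialLinearGroup (Fin 2) F, z * w = w * z) := by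
  intro h
  have h2 := h (QuotientGroup.mk (TU 1)) (QuotientGroup.mk (TL 1))
  rw [← QuotientGroup.mk_mul, ← QuotientGroup.mk_mul] at h2
  obtain ⟨Z, hZ, hBZ⟩ := mk_eq_mk h2
  obtain ⟨r, -, hr⟩ := Matrix.SpecialLinearGroup.mem_center_iff.mp hZ
  have key : (TL (F := F) 1 * TU 1).val = (TU (F := F) 1 * TL 1).val * Z.val := by
    rw [hBZ]; rfl
  rw [← hr] at key
  have k1 : (TL (F := F) 1 * TU 1).val = !![1,1;1,2] := by
    rw [Matrix.SpecialLinearGroup.coe_mul]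
    simp [TL, TU, Matrix.SpecialLinearGroup.coe_mul, Matrix.mul_fin_two]
    norm_num
  have k2 : (TU (F := F) 1 * TL 1).val = !![2,1;1,1] := by
    rw [Matrix.SpecialLinearGroup.coe_mul]
    simp [TL, TU, Matrix.SpecialLinearGroup.coe_mul, Matrix.mul_fin_two]
    norm_num
  rw [k1, k2] at key
  have h01 : (1 : F) = r := by
    have := congrFun (congrFun key 0) 1
    simpa [Matrix.mul_apply, Fin.sum_univ_two, Matrix.scalar_apply] using this
  have h00 : (1 : F) = 2 * r := by
    have := congrFun (congrFun key 0) 0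
    simpa [Matrix.mul_apply, Fin.sum_univ_two, Matrix.scalar_apply] using this
  rw [← h01, mul_one] at h00
  have h3 : (1 : F) + 1 = 1 + 0 := by
    rw [add_zero, one_add_one_eq_two]
    exact h00.symm
  exact one_ne_zero (add_left_cancel h3)

theorem sq_zero_of_trace_det (g : M2) (h1 : Matrix.trace g = 0) (h2 : det g = 0) :
    g * g = 0 := by
  rw [Matrix.trace_fin_two] at h1
  rw [Matrix.det_fin_two] at h2
  ext i j
  fin_cases i <;> fin_cases j <;>
    simp [Matrix.mul_apply, Fin.sum_univ_two] <;>
    [linear_combination (g 0 0) * h1 - h2; linear_combination (g 0 1) * h1;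
     linear_combination (g 1 0) * h1; linear_combination (g 1 1) * h1 - h2]

theorem comm_trace_zero (A B : M2) : Matrix.trace (A * B - B * A) = 0 := by
  rw [Matrix.trace_sub, Matrix.trace_mul_comm, sub_self]

/-- The Borel subgroup of SL₂ (upper triangular). -/
def BorelSL : Subgroup (Matrix.SpecialLinearGroup (Fin 2) F) where
  carrier := {A | (A : Matrix (Fin 2) (Fin 2) F) 1 0 = 0}
  one_mem' := by simp [Matrix.SpecialLinearGroup.coe_one]
  mul_mem' := by
    intro A B hA hB
    simp only [Set.mem_setOf_eq, Matrix.SpecialLinearGroup.coe_mul] at *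
    rw [Matrix.mul_apply, Fin.sum_univ_two, hA, hB]
    ring
  inv_mem' := by
    intro A hA
    simp only [Set.mem_setOf_eq] at *
    rw [Matrix.SpecialLinearGroup.coe_inv, Matrix.adjugate_fin_two]
    simp [hA]

-- conjugating a rank-one square-zero matrix to !![0,1;0,0]
theorem conj_nilpotent (g : M2) (hsq : g * g = 0) (hne : g ≠ 0) :
    ∃ P : (M2)ˣ, ((P⁻¹ : (M2)ˣ) : M2) * g * (P : M2) = !![0,1;0,0] := by
  have hij : ∃ i j, g i j ≠ 0 := by
    by_contra hc
    push_neg at hc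
    exact hne (by ext i j; simpa using hc i j)
  obtain ⟨i, j, hij⟩ := hij
  set u : Fin 2 → F := Pi.single j 1 with hu
  set w : Fin 2 → F := g.mulVec u with hwdef
  have hwi : w i = g i j := by
    simp [hwdef, hu, Matrix.mulVec, dotProduct, Pi.single_apply]
  have hgw : g.mulVec w = 0 := by
    rw [hwdef, Matrix.mulVec_mulVec, hsq]
    simp
  set P : M2 := !![w 0, u 0; w 1, u 1] with hP
  have hdP : det P ≠ 0 := by
    rw [hP, Matrix.det_fin_two_of]
    intro h0
    -- u is proportional to w, hence w = g.mulVec u is proportional to g.mulVec w = 0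
    have hwine : w i ≠ 0 := by rw [hwi]; exact hij
    have key : ∀ c : F, u = c • w → False := by
      intro c hc
      have hcc : w = c • (g.mulVec w) := by
        conv_lhs => rw [hwdef, hc]
        rw [Matrix.mulVec_smul]
      rw [hgw, smul_zero] at hcc
      exact hwine (by rw [hcc]; rfl)
    fin_cases i
    · have hw0 : w 0 ≠ 0 := hwine
      refine key (u 0 / w 0) ?_
      funext k
      fin_cases k
      · show u 0 = u 0 / w 0 * w 0
        field_simp
      · show u 1 = u 0 / w 0 * w 1
        rw [div_mul_eq_mul_div, eq_div_iff hw0]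
        linear_combination h0
    · have hw1 : w 1 ≠ 0 := hwine
      refine key (u 1 / w 1) ?_
      funext k
      fin_cases k
      · show u 0 = u 1 / w 1 * w 0
        rw [div_mul_eq_mul_div, eq_div_iff hw1]
        linear_combination -h0
      · show u 1 = u 1 / w 1 * w 1
        field_simp
  have hunit : IsUnit P := (Matrix.isUnit_iff_isUnit_det P).mpr (Ne.isUnit hdP)
  obtain ⟨Pu, hPu⟩ := hunit
  refine ⟨Pu, ?_⟩
  have hgP : g * P = P * !![0,1;0,0] := by
    have e0 : ∀ k, g k 0 * w 0 + g k 1 * w 1 = 0 := by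
      intro k
      have := congrFun hgw k
      simpa [Matrix.mulVec, dotProduct, Fin.sum_univ_two] using this
    have e1 : ∀ k, g k 0 * u 0 + g k 1 * u 1 = w k := by
      intro k
      have : (g.mulVec u) k = w k := by rw [← hwdef]
      simpa [Matrix.mulVec, dotProduct, Fin.sum_univ_two] using this
    ext a b
    fin_cases a <;> fin_cases b <;>
      simp [hP, Matrix.mul_apply, Fin.sum_univ_two] <;>
      [exact e0 0; exact e1 0; exact e0 1; exact e1 1]
  have h2 : g * (Pu : M2) = (Pu : M2) * !![0,1;0,0] := by rw [hPu]; exact hgP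
  calc ((Pu⁻¹ : (M2)ˣ) : M2) * g * (Pu : M2)
      = ((Pu⁻¹ : (M2)ˣ) : M2) * (g * (Pu : M2)) := by rw [mul_assoc]
    _ = ((Pu⁻¹ : (M2)ˣ) : M2) * ((Pu : M2) * !![0,1;0,0]) := by rw [h2]
    _ = (((Pu⁻¹ : (M2)ˣ) : M2) * (Pu : M2)) * !![0,1;0,0] := by rw [mul_assoc]
    _ = !![0,1;0,0] := by
        rw [← Units.val_mul, inv_mul_cancel, Units.val_one, one_mul]

theorem conj_in_sl (P : (M2)ˣ) (A B : M2) :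
    (((P⁻¹ : (M2)ˣ) : M2) * A * (P : M2)) * (((P⁻¹ : (M2)ˣ) : M2) * B * (P : M2))
      = ((P⁻¹ : (M2)ˣ) : M2) * (A * B) * (P : M2) := by
  have h := unit_mul_inv P
  calc (((P⁻¹ : (M2)ˣ) : M2) * A * (P : M2)) * (((P⁻¹ : (M2)ˣ) : M2) * B * (P : M2))
      = ((P⁻¹ : (M2)ˣ) : M2) * A * ((P : M2) * ((P⁻¹ : (M2)ˣ) : M2)) * B * (P : M2) := by
        noncomm_ring
    _ = ((P⁻¹ : (M2)ˣ) : M2) * (A * B) * (P : M2) := by rw [h]; noncomm_ring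

theorem not_gen_of_nilpotent (X Y : SL2)
    (hdet : det ((X : M2) * (Y : M2) - (Y : M2) * (X : M2)) = 0)
    (hne : (X : M2) * (Y : M2) - (Y : M2) * (X : M2) ≠ 0) :
    Subgroup.closure {(QuotientGroup.mk X : PSL2), QuotientGroup.mk Y} ≠ ⊤ := by
  intro htop
  have hsq := sq_zero_of_trace_det _ (comm_trace_zero (X : M2) (Y : M2)) hdet
  obtain ⟨P, hn⟩ := conj_nilpotent _ hsq hne
  set X' : SL2 := conjSL P⁻¹ X with hX'def
  set Y' : SL2 := conjSL P⁻¹ Y with hY'def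
  have hcX' : (X' : M2) = ((P⁻¹ : (M2)ˣ) : M2) * (X : M2) * (P : M2) := by
    rw [hX'def, conjSL_apply, inv_inv]
  have hcY' : (Y' : M2) = ((P⁻¹ : (M2)ˣ) : M2) * (Y : M2) * (P : M2) := by
    rw [hY'def, conjSL_apply, inv_inv]
  have hcomm : (X' : M2) * (Y' : M2) - (Y' : M2) * (X' : M2) = !![0,1;0,0] := by
    rw [hcX', hcY', conj_in_sl, conj_in_sl, ← hn]
    noncomm_ring
  have hX10 : (X' : M2) 1 0 = 0 := by
    have h := keyid (X' : M2) (Y' : M2)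
    rw [hcomm] at h
    have := congrFun (congrFun h 0) 0
    simpa [Matrix.mul_apply, Fin.sum_univ_two, Matrix.adjugate_fin_two] using this
  have hY10 : (Y' : M2) 1 0 = 0 := by
    have h := keyid' (X' : M2) (Y' : M2)
    rw [hcomm] at h
    have := congrFun (congrFun h 0) 0
    simpa [Matrix.mul_apply, Fin.sum_univ_two, Matrix.adjugate_fin_two] using this
  -- transport the generation property through the conjugation automorphism
  have htop' : Subgroup.closure {(QuotientGroup.mk X' : PSL2), QuotientGroup.mk Y'} = ⊤ := by
    have hmap := congrArg (Subgroup.map (conjPSL P⁻¹).toMonoidHom) htop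
    rw [MonoidHom.map_closure, Set.image_pair] at hmap
    have h2 : Subgroup.map (conjPSL P⁻¹).toMonoidHom (⊤ : Subgroup PSL2) = ⊤ :=
      Subgroup.map_top_of_surjective _ (conjPSL P⁻¹).surjective
    rw [h2] at hmap
    exact hmap
  -- the image of the Borel subgroup
  set BB : Subgroup PSL2 := BorelSL.map (QuotientGroup.mk' (Subgroup.center SL2)) with hBBdef
  have hle : Subgroup.closure {(QuotientGroup.mk X' : PSL2), QuotientGroup.mk Y'} ≤ BB := by
    apply (Subgroup.closure_le _).mpr
    intro z hz
    rcases hz with h | h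
    · rw [h]; exact ⟨X', hX10, rfl⟩
    · rw [Set.mem_singleton_iff] at h; rw [h]; exact ⟨Y', hY10, rfl⟩
  rw [htop'] at hle
  -- but the antidiagonal element is not in BB
  set W : SL2 := ⟨!![0,1;-1,0], by simp [Matrix.det_fin_two]⟩ with hWdef
  have hW : (QuotientGroup.mk W : PSL2) ∈ BB := hle (Subgroup.mem_top _)
  obtain ⟨A, hA, hAeq⟩ := hW
  have hAeq' : (QuotientGroup.mk A : PSL2) = QuotientGroup.mk W := hAeq
  obtain ⟨Z, hZ, hWZ⟩ := mk_eq_mk hAeq'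
  have hZ10 := (center_offdiag hZ).2
  have hent := congrFun (congrFun (congrArg Subtype.val hWZ) 1) 0
  rw [Matrix.SpecialLinearGroup.coe_mul, Matrix.mul_apply, Fin.sum_univ_two] at hent
  have hA10 : (A : M2) 1 0 = 0 := hA
  rw [hA10, hZ10, hWdef] at hent
  simp at hent

theorem not_gen_of_comm (X Y : SL2)
    (hc : (X : M2) * (Y : M2) - (Y : M2) * (X : M2) = 0) :
    Subgroup.closure {(QuotientGroup.mk X : PSL2), QuotientGroup.mk Y} ≠ ⊤ := by
  intro htop
  set x : PSL2 := QuotientGroup.mk X with hx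
  set y : PSL2 := QuotientGroup.mk Y with hy
  have hXY : X * Y = Y * X := by
    apply Subtype.ext
    rw [Matrix.SpecialLinearGroup.coe_mul, Matrix.SpecialLinearGroup.coe_mul]
    exact sub_eq_zero.mp hc
  have hxy : x * y = y * x := by
    rw [hx, hy, ← QuotientGroup.mk_mul, ← QuotientGroup.mk_mul, hXY]
  have hcent : ∀ z : PSL2, z ∈ Subgroup.centralizer {x, y} := by
    have hclle : Subgroup.closure {x, y} ≤ Subgroup.centralizer {x, y} := by
      apply (Subgroup.closure_le _).mpr
      intro z hz
      rcases hz with h | h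
      · rw [h]
        intro g hg
        rcases hg with h' | h'
        · rw [h']
        · rw [Set.mem_singleton_iff] at h'; rw [h']; exact hxy.symm
      · rw [Set.mem_singleton_iff] at h; rw [h]
        intro g hg
        rcases hg with h' | h'
        · rw [h']; exact hxy
        · rw [Set.mem_singleton_iff] at h'; rw [h']
    intro z
    exact hclle (htop ▸ Subgroup.mem_top z)
  apply psl_not_comm (F := F)
  intro z w
  have hxc : x ∈ Subgroup.center PSL2 := by
    rw [Subgroup.mem_center_iff]
    intro g
    exact (hcent g x (Set.mem_insert _ _)).symm
  have hyc : y ∈ Subgroup.center PSL2 := by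
    rw [Subgroup.mem_center_iff]
    intro g
    exact (hcent g y (Set.mem_insert_of_mem _ rfl)).symm
  have hall : ∀ z : PSL2, z ∈ Subgroup.center PSL2 := by
    intro z
    have : Subgroup.closure {x, y} ≤ Subgroup.center PSL2 := by
      apply (Subgroup.closure_le _).mpr
      intro g hg
      rcases hg with h | h
      · rw [h]; exact hxc
      · rw [Set.mem_singleton_iff] at h; rw [h]; exact hyc
    exact this (htop ▸ Subgroup.mem_top z)
  exact Subgroup.mem_center_iff.mp (hall w) z

/-- Part B: every generating pair of PSL(2,F) is symmetric. -/
theorem partB (x y : PSL2) (h : Subgroup.closure {x, y} = ⊤) :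
    ∃ φ : MulAut PSL2, φ x = x⁻¹ ∧ φ y = y⁻¹ := by
  obtain ⟨X, rfl⟩ := QuotientGroup.mk_surjective x
  obtain ⟨Y, rfl⟩ := QuotientGroup.mk_surjective y
  by_cases hdet : det ((X : M2) * (Y : M2) - (Y : M2) * (X : M2)) = 0
  · by_cases hzero : (X : M2) * (Y : M2) - (Y : M2) * (X : M2) = 0
    · exact absurd h (not_gen_of_comm X Y hzero)
    · exact absurd h (not_gen_of_nilpotent X Y hdet hzero)
  · have hu : IsUnit ((X : M2) * (Y : M2) - (Y : M2) * (X : M2)) :=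
      (Matrix.isUnit_iff_isUnit_det _).mpr (Ne.isUnit hdet)
    obtain ⟨Pu, hPu⟩ := hu
    refine ⟨conjPSL Pu, ?_, ?_⟩
    · show conjPSL Pu (QuotientGroup.mk X) = (QuotientGroup.mk X)⁻¹
      rw [conjPSL_mk]
      have : conjSL Pu X = X⁻¹ := by
        apply Subtype.ext
        rw [conjSL_apply, Matrix.SpecialLinearGroup.coe_inv]
        have hk := keyid (X : M2) (Y : M2)
        rw [← hPu] at hk
        calc (Pu : M2) * (X : M2) * ((Pu⁻¹ : (M2)ˣ) : M2)
            = ((Pu : M2) * (X : M2)) * ((Pu⁻¹ : (M2)ˣ) : M2) := by rw [mul_assoc]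
          _ = ((X : M2).adjugate * (Pu : M2)) * ((Pu⁻¹ : (M2)ˣ) : M2) := by
              rw [show (Pu : M2) * (X : M2) = (X : M2).adjugate * (Pu : M2) from hk]
          _ = (X : M2).adjugate * ((Pu : M2) * ((Pu⁻¹ : (M2)ˣ) : M2)) := by rw [mul_assoc]
          _ = (X : M2).adjugate := by rw [unit_mul_inv, mul_one]
      rw [this]
      rfl
    · show conjPSL Pu (QuotientGroup.mk Y) = (QuotientGroup.mk Y)⁻¹
      rw [conjPSL_mk]
      have : conjSL Pu Y = Y⁻¹ := by
        apply Subtype.ext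
        rw [conjSL_apply, Matrix.SpecialLinearGroup.coe_inv]
        have hk := keyid' (X : M2) (Y : M2)
        rw [← hPu] at hk
        calc (Pu : M2) * (Y : M2) * ((Pu⁻¹ : (M2)ˣ) : M2)
            = ((Pu : M2) * (Y : M2)) * ((Pu⁻¹ : (M2)ˣ) : M2) := by rw [mul_assoc]
          _ = ((Y : M2).adjugate * (Pu : M2)) * ((Pu⁻¹ : (M2)ˣ) : M2) := by
              rw [show (Pu : M2) * (Y : M2) = (Y : M2).adjugate * (Pu : M2) from hk]
          _ = (Y : M2).adjugate * ((Pu : M2) * ((Pu⁻¹ : (M2)ˣ) : M2)) := by rw [mul_assoc]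
          _ = (Y : M2).adjugate := by rw [unit_mul_inv, mul_one]
      rw [this]
      rfl

theorem decompose_lower (A : SL2) (hc : (A : M2) 1 0 ≠ 0) :
    A = TU (((A : M2) 0 0 - 1) / (A : M2) 1 0) * TL ((A : M2) 1 0)
        * TU (((A : M2) 1 1 - 1) / (A : M2) 1 0) := by
  have hdet : (A : M2) 0 0 * (A : M2) 1 1 - (A : M2) 0 1 * (A : M2) 1 0 = 1 := by
    have := A.property
    rwa [Matrix.det_fin_two] at this
  apply Subtype.ext
  rw [Matrix.SpecialLinearGroup.coe_mul, Matrix.SpecialLinearGroup.coe_mul]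
  show (A : M2) = _
  rw [Matrix.eta_fin_two (A : M2)]
  simp only [TU, TL]
  ext i j
  fin_cases i <;> fin_cases j <;>
    simp [Matrix.mul_apply, Fin.sum_univ_two] <;> field_simp <;> ring_nf
  · linear_combination -hdet
  
theorem gauss (H : Subgroup (Matrix.SpecialLinearGroup (Fin 2) F))
    (hU : ∀ t, TU t ∈ H) (hL : ∀ t, TL t ∈ H) (A : Matrix.SpecialLinearGroup (Fin 2) F) :
    A ∈ H := by
  by_cases hc : (A : M2) 1 0 ≠ 0
  · rw [decompose_lower A hc]
    exact mul_mem (mul_mem (hU _) (hL _)) (hU _)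
  · push_neg at hc
    have hc' : ((TL 1 * A : SL2) : M2) 1 0 ≠ 0 := by
      rw [Matrix.SpecialLinearGroup.coe_mul]
      rw [Matrix.mul_apply, Fin.sum_univ_two]
      simp only [TL]
      intro h0
      -- entry = 1 * A00 + 1 * A10 = A00
      have ha : (A : M2) 0 0 ≠ 0 := by
        intro h00
        have := A.property
        rw [Matrix.det_fin_two, h00, hc] at this
        simp at this
      apply ha
      simpa [hc] using h0
    have : TL 1 * A ∈ H := by
      rw [decompose_lower _ hc']
      exact mul_mem (mul_mem (hU _) (hL _)) (hU _)
    have h2 : A = (TL 1)⁻¹ * (TL 1 * A) := by group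
    rw [h2, TL_inv]
    exact mul_mem (hL _) this

/-- the additive group generated by the even powers of a generator of `Fˣ` is everything. -/
theorem addclosure_top (ν : Fˣ) (hgen : ∀ z : Fˣ, z ∈ Subgroup.zpowers ν) :
    AddSubgroup.closure (Set.range fun m : ℤ => ((ν ^ (2*m) : Fˣ) : F)) = ⊤ := by
  set A := AddSubgroup.closure (Set.range fun m : ℤ => ((ν ^ (2*m) : Fˣ) : F)) with hA
  rw [eq_top_iff]
  intro t _
  have hsq : ∀ z : F, z ≠ 0 → z^2 ∈ A := by
    intro z hz
    obtain ⟨m, hm⟩ := hgen (Units.mk0 z hz)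
    have hm' : ν ^ m = Units.mk0 z hz := hm
    have h1 : z ^ 2 = ((ν ^ (2*m) : Fˣ) : F) := by
      have hz2 : z = ((ν ^ m : Fˣ) : F) := by rw [hm']; rfl
      rw [hz2, ← Units.val_pow_eq_pow_val]
      congr 1
      rw [← zpow_natCast (ν ^ m) 2, ← _root_.zpow_mul]
      norm_num [mul_comm]
    rw [h1]
    exact AddSubgroup.subset_closure ⟨m, rfl⟩
  by_cases hchar : (2 : F) = 0
  · -- characteristic 2 : squaring is surjective
    rcases eq_or_ne t 0 with rfl | ht
    · exact zero_mem A
    · have hinj : Function.Injective (fun z : F => z ^ 2) := by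
        intro a b hab
        simp only at hab
        have h3 : (a - b)^2 = 0 := by linear_combination hab + (b^2 - a*b)*hchar
        have h4 := pow_eq_zero_iff (n := 2) (by norm_num) |>.mp h3
        exact sub_eq_zero.mp h4
      have hsurj := Finite.injective_iff_surjective.mp hinj
      obtain ⟨v, hv⟩ := hsurj t
      simp only at hv
      have hvne : v ≠ 0 := by
        intro h0
        rw [h0] at hv
        simp at hv
        exact ht hv.symm
      rw [← hv]
      exact hsq v hvne
  · -- odd characteristic : difference of two squares
    have hid : t = ((t+1)/2)^2 - ((t-1)/2)^2 := by
      field_simp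
      ring
    have h1 : ((t+1)/2)^2 ∈ A := by
      rcases eq_or_ne ((t+1)/2) 0 with h | h
      · rw [h]; simpa using zero_mem A
      · exact hsq _ h
    have h2 : ((t-1)/2)^2 ∈ A := by
      rcases eq_or_ne ((t-1)/2) 0 with h | h
      · rw [h]; simpa using zero_mem A
      · exact hsq _ h
    rw [hid]
    exact sub_mem h1 h2

def DG (ν : Fˣ) : Matrix.SpecialLinearGroup (Fin 2) F :=
  ⟨!![(ν : F), 0; 0, ((ν⁻¹ : Fˣ) : F)], by
    simp [Matrix.det_fin_two, ← Units.val_mul]⟩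

def W0 : Matrix.SpecialLinearGroup (Fin 2) F :=
  ⟨!![-1, 1; -1, 0], by simp [Matrix.det_fin_two]⟩

theorem DG_inv (ν : Fˣ) : (DG (F := F) ν)⁻¹ = DG ν⁻¹ := by
  apply Subtype.ext
  rw [Matrix.SpecialLinearGroup.coe_inv]
  simp [DG, Matrix.adjugate_fin_two]

theorem W0_inv_coe : (((W0 (F := F))⁻¹ : Matrix.SpecialLinearGroup (Fin 2) F) : M2)
    = !![0, -1; 1, -1] := by
  rw [Matrix.SpecialLinearGroup.coe_inv]
  simp [W0, Matrix.adjugate_fin_two]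

theorem conj_TU (ν : Fˣ) (t : F) :
    DG (F := F) ν * TU t * (DG ν)⁻¹ = TU (((ν : F))^2 * t) := by
  have hne : (ν : F) ≠ 0 := Units.ne_zero ν
  apply Subtype.ext
  rw [DG_inv]
  rw [Matrix.SpecialLinearGroup.coe_mul, Matrix.SpecialLinearGroup.coe_mul]
  simp only [DG, TU, inv_inv]
  ext i j
  fin_cases i <;> fin_cases j <;>
    simp [Matrix.mul_apply, Fin.sum_univ_two, Units.val_inv_eq_inv_val] <;>
    (try field_simp) <;> (try ring)

theorem conj_TU' (ν : Fˣ) (t : F) :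
    (DG (F := F) ν)⁻¹ * TU t * DG ν = TU ((((ν : F))⁻¹)^2 * t) := by
  have hne : (ν : F) ≠ 0 := Units.ne_zero ν
  apply Subtype.ext
  rw [DG_inv]
  rw [Matrix.SpecialLinearGroup.coe_mul, Matrix.SpecialLinearGroup.coe_mul]
  simp only [DG, TU, inv_inv]
  ext i j
  fin_cases i <;> fin_cases j <;>
    simp [Matrix.mul_apply, Fin.sum_univ_two, Units.val_inv_eq_inv_val] <;>
    (try field_simp) <;> (try ring) <;> (try tauto)

theorem conj_TU_TL (t : F) :
    (W0 (F := F))⁻¹ * TU t * W0 = TL (-t) := by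
  apply Subtype.ext
  rw [Matrix.SpecialLinearGroup.coe_mul, Matrix.SpecialLinearGroup.coe_mul, W0_inv_coe]
  simp only [W0, TU, TL]
  ext i j
  fin_cases i <;> fin_cases j <;>
    simp [Matrix.mul_apply, Fin.sum_univ_two]

theorem comm_DG_W0 (ν : Fˣ) :
    (DG (F := F) ν)⁻¹ * (DG ν)⁻¹ * (DG ν * W0 * (DG ν)⁻¹ * W0⁻¹)
      = TU ((((ν : F))⁻¹)^2 - 1) := by
  have hne : (ν : F) ≠ 0 := Units.ne_zero ν
  apply Subtype.ext
  rw [DG_inv]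
  simp only [Matrix.SpecialLinearGroup.coe_mul, W0_inv_coe]
  simp only [DG, W0, TU]
  ext i j
  fin_cases i <;> fin_cases j <;>
    simp [Matrix.mul_apply, Fin.sum_univ_two, Units.val_inv_eq_inv_val] <;>
    (try field_simp) <;> (try ring)


/-- SL(2,F) is generated by two elements. -/
theorem genSL : ∃ x y : Matrix.SpecialLinearGroup (Fin 2) F,
    Subgroup.closure ({x, y} : Set (Matrix.SpecialLinearGroup (Fin 2) F)) = ⊤ := by
  obtain ⟨ν, hgen⟩ := IsCyclic.exists_generator (α := Fˣ)
  by_cases hsmall : ((ν : F))^2 = 1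
  · -- small fields : F = {0, 1, -1}
    have hall : ∀ t : F, t = 0 ∨ t = 1 ∨ t = -1 := by
      intro t
      rcases eq_or_ne t 0 with h | h
      · exact Or.inl h
      · obtain ⟨m, hm⟩ := hgen (Units.mk0 t h)
        have hm' : ν ^ m = Units.mk0 t h := hm
        have ht2 : t^2 = 1 := by
          have : t = ((ν ^ m : Fˣ) : F) := by rw [hm']; rfl
          rw [this, ← Units.val_pow_eq_pow_val]
          have hν2 : ν^(2:ℕ) = 1 := by
            apply Units.ext
            rw [Units.val_pow_eq_pow_val, hsmall, Units.val_one]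
          have : (ν ^ m)^(2:ℕ) = ((ν^(2:ℕ))^m : Fˣ) := by
            rw [← zpow_natCast (ν ^ m) 2, ← _root_.zpow_mul, mul_comm,
              _root_.zpow_mul, zpow_natCast]
          rw [this, hν2, _root_.one_zpow, Units.val_one]
        have : (t - 1) * (t + 1) = 0 := by linear_combination ht2
        rcases mul_eq_zero.mp this with h1 | h1
        · exact Or.inr (Or.inl (by linear_combination h1))
        · exact Or.inr (Or.inr (by linear_combination h1))
    refine ⟨TU 1, TL 1, ?_⟩
    rw [eq_top_iff]
    intro A _
    apply gauss
    · intro t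
      rcases hall t with h | h | h
      · rw [h, TU_zero]; exact one_mem _
      · rw [h]; exact Subgroup.subset_closure (Set.mem_insert _ _)
      · rw [h, show (-1 : F) = -(1:F) from rfl, ← TU_inv]
        exact inv_mem (Subgroup.subset_closure (Set.mem_insert _ _))
    · intro t
      rcases hall t with h | h | h
      · rw [h, TL_zero]; exact one_mem _
      · rw [h]; exact Subgroup.subset_closure (Set.mem_insert_of_mem _ rfl)
      · rw [h, show (-1 : F) = -(1:F) from rfl, ← TL_inv]
        exact inv_mem (Subgroup.subset_closure (Set.mem_insert_of_mem _ rfl))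
  · -- main case
    refine ⟨DG ν, W0, ?_⟩
    set H := Subgroup.closure ({DG ν, W0} : Set SL2) with hH
    have hx : DG ν ∈ H := Subgroup.subset_closure (Set.mem_insert _ _)
    have hy : W0 (F := F) ∈ H := Subgroup.subset_closure (Set.mem_insert_of_mem _ rfl)
    set c : F := (((ν : F))⁻¹)^2 - 1 with hc
    have hcne : c ≠ 0 := by
      rw [hc]
      intro h0
      apply hsmall
      have hne : (ν : F) ≠ 0 := Units.ne_zero ν
      have : ((ν : F))⁻¹^2 = 1 := by linear_combination h0
      field_simp at this
      linear_combination -this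
    have hUc : TU c ∈ H := by
      rw [← comm_DG_W0]
      exact mul_mem (mul_mem (inv_mem hx) (inv_mem hx))
        (mul_mem (mul_mem (mul_mem hx hy) (inv_mem hx)) (inv_mem hy))
    -- the additive subgroup of t with TU t ∈ H
    set S : AddSubgroup F :=
      { carrier := {t : F | TU t ∈ H}
        zero_mem' := by rw [Set.mem_setOf_eq, TU_zero]; exact one_mem _
        add_mem' := by
          intro a b ha hb
          rw [Set.mem_setOf_eq] at *
          rw [← TU_mul]
          exact mul_mem ha hb
        neg_mem' := by
          intro a ha
          rw [Set.mem_setOf_eq] at *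
          rw [show (-a : F) = -a from rfl, ← TU_inv]
          exact inv_mem ha } with hS
    have hSmem : ∀ t : F, t ∈ S → TU t ∈ H := fun t ht => ht
    have hscale : ∀ t : F, t ∈ S → ((ν : F))^2 * t ∈ S := by
      intro t ht
      show TU (((ν : F))^2 * t) ∈ H
      rw [← conj_TU]
      exact mul_mem (mul_mem hx ht) (inv_mem hx)
    have hscale' : ∀ t : F, t ∈ S → (((ν : F))⁻¹)^2 * t ∈ S := by
      intro t ht
      show TU ((((ν : F))⁻¹)^2 * t) ∈ H
      rw [← conj_TU']
      exact mul_mem (mul_mem (inv_mem hx) ht) hx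
    -- seed
    have hseed : ∀ m : ℤ, ((ν ^ (2*m) : Fˣ) : F) * c ∈ S := by
      have hbase : ((ν ^ (2*(0:ℤ)) : Fˣ) : F) * c ∈ S := by
        norm_num
        exact hUc
      intro m
      induction m using Int.induction_on with
      | zero => exact hbase
      | succ n ih =>
          have heq : ((ν ^ (2*((n:ℤ)+1)) : Fˣ) : F) * c
              = ((ν : F))^2 * (((ν ^ (2*(n:ℤ)) : Fˣ) : F) * c) := by
            have : (ν ^ (2*((n:ℤ)+1)) : Fˣ) = ν^(2:ℕ) * ν ^ (2*(n:ℤ)) := by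
              rw [← zpow_natCast ν 2, ← _root_.zpow_add]
              congr 1
              ring
            rw [this, Units.val_mul, Units.val_pow_eq_pow_val]
            ring
          rw [heq]
          exact hscale _ ih
      | pred n ih =>
          have heq : ((ν ^ (2*(-(n:ℤ)-1)) : Fˣ) : F) * c
              = (((ν : F))⁻¹)^2 * (((ν ^ (2*(-(n:ℤ))) : Fˣ) : F) * c) := by
            have h1 : (ν ^ (2*(-(n:ℤ)-1)) : Fˣ) = (ν⁻¹)^(2:ℕ) * ν ^ (2*(-(n:ℤ))) := by
              rw [← zpow_natCast ν⁻¹ 2, _root_.inv_zpow, ← _root_.zpow_neg, ← _root_.zpow_add]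
              congr 1
              ring
            rw [h1, Units.val_mul, Units.val_pow_eq_pow_val, Units.val_inv_eq_inv_val]
            ring
          rw [heq]
          exact hscale' _ ih
    -- all upper transvections
    have hU : ∀ t : F, TU t ∈ H := by
      have hAt := addclosure_top ν hgen
      set S' : AddSubgroup F :=
        { carrier := {t : F | c * t ∈ S}
          zero_mem' := by rw [Set.mem_setOf_eq, mul_zero]; exact zero_mem S
          add_mem' := by
            intro a b ha hb
            rw [Set.mem_setOf_eq] at *
            rw [mul_add]
            exact add_mem ha hb
          neg_mem' := by
            intro a ha
            rw [Set.mem_setOf_eq] at *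
            rw [mul_neg]
            exact neg_mem ha } with hS'
      have hle : AddSubgroup.closure (Set.range fun m : ℤ => ((ν ^ (2*m) : Fˣ) : F)) ≤ S' := by
        apply AddSubgroup.closure_le S' |>.mpr
        rintro z ⟨m, rfl⟩
        show c * ((ν ^ (2*m) : Fˣ) : F) ∈ S
        rw [mul_comm]
        exact hseed m
      rw [hAt] at hle
      intro t
      have := hle (AddSubgroup.mem_top (c⁻¹ * t))
      have h2 : c * (c⁻¹ * t) ∈ S := this
      rwa [mul_inv_cancel_left₀ hcne] at h2
    -- all lower transvections
    have hL : ∀ t : F, TL t ∈ H := by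
      intro t
      have h1 : (W0 (F := F))⁻¹ * TU (-t) * W0 = TL t := by
        rw [conj_TU_TL, neg_neg]
      rw [← h1]
      exact mul_mem (mul_mem (inv_mem hy) (hU (-t))) hy
    rw [eq_top_iff]
    intro A _
    exact gauss H hU hL A


/-- Part A: PSL(2,F) is generated by two elements. -/
theorem partA : ∃ x y : PSL2, Subgroup.closure ({x, y} : Set PSL2) = ⊤ := by
  obtain ⟨x, y, hxy⟩ := genSL (F := F)
  refine ⟨QuotientGroup.mk x, QuotientGroup.mk y, ?_⟩
  have hmap := congrArg (Subgroup.map (QuotientGroup.mk' (Subgroup.center SL2))) hxy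
  rw [MonoidHom.map_closure, Set.image_pair] at hmap
  rw [Subgroup.map_top_of_surjective _ (QuotientGroup.mk'_surjective _)] at hmap
  exact hmap

end StronglySymmetricAux

/-- For every prime power `q`, the group `PSL(2, q)` is strongly symmetric. -/
theorem psl_two_strongly_symmetric
    (q : ℕ) (hq : IsPrimePow q)
    (F : Type*) [Field F] [Fintype F] (hF : Fintype.card F = q) :
    StronglySymmetric (Matrix.ProjectiveSpecialLinearGroup (Fin 2) F) := by
  constructor
  · exact partA
  · intro x y h
    exact partB x y h
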